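/- arXiv:2008.01379 — 2 statements merged into one kernel-verified Lean document; each statement's English description precedes it below -/
import Mathlib

section
/- Let S be a Γ-graded semigroup with local units. Then there is an isomorphism of categories F_# : Gr-S → Mod-(S#Γ) such that for every α ∈ Γ the diagram F_# ∘ T_α = T_α ∘ F_# commutes, where T_α denotes the α-shift functor on Gr-S and the corresponding shift functor on Mod-(S#Γ). (On objects, F_# sends a Γ-graded unital left S-set X to X with the S#Γ-action (sP_α)x = sx if x ∈ X_α and 0 otherwise; morphisms are sent to themselves.) -/
open CategoryTheory

universe u v w

/-- A `Γ`-grading on a semigroup with zero `S`. -/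
structure Grading (Γ : Type u) [Group Γ] (S : Type w) [SemigroupWithZero S] :
    Type max u w where
  deg : S → Γ
  deg_mul : ∀ s t : S, s * t ≠ 0 → deg (s * t) = deg s * deg t

/-- `S` has local units. -/
def HasLocalUnits (S : Type w) [SemigroupWithZero S] : Prop :=
  ∀ s : S, ∃ u v : S, u * u = u ∧ v * v = v ∧ u * s = s ∧ s * v = s

/-- The underlying set of the smash product `S#Γ`. -/
abbrev Smash (Γ : Type u) (S : Type w) [SemigroupWithZero S] : Type max u w :=
  Option ({ s : S // s ≠ 0 } × Γ)

open Classical in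
/-- Multiplication in the smash product `S#Γ`. -/
noncomputable def smashMul {Γ : Type u} [Group Γ] {S : Type w} [SemigroupWithZero S]
    (g : Grading Γ S) (a b : Smash Γ S) : Smash Γ S :=
  a.bind fun p => b.bind fun q =>
    if h : p.1.1 * q.1.1 ≠ 0 ∧ g.deg q.1.1 = p.2 * q.2⁻¹ then
      some (⟨p.1.1 * q.1.1, h.1⟩, q.2)
    else none

variable {Γ : Type u} [Group Γ] {S : Type w} [SemigroupWithZero S]

/-- An object of `Gr-S`: a unital pointed `Γ`-graded left `S`-set. -/
structure GrMod (g : Grading Γ S) : Type max u w (v + 1) where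
  X : Type v
  zero : X
  act : S → X → X
  act_mul : ∀ (s t : S) (x : X), act s (act t x) = act (s * t) x
  act_zero : ∀ x : X, act 0 x = zero
  unital : ∀ x : X, ∃ (s : S) (y : X), act s y = x
  degX : {x : X // x ≠ zero} → Γ
  deg_act : ∀ (s : S) (x : X) (hx : x ≠ zero) (h : act s x ≠ zero),
      degX ⟨act s x, h⟩ = g.deg s * degX ⟨x, hx⟩

/-- A morphism of `Gr-S`: a graded `S`-map. -/
structure GrHom {g : Grading Γ S} (A B : GrMod.{u, v, w} g) : Type v where
  f : A.X → B.X
  map_act : ∀ (s : S) (x : A.X), f (A.act s x) = B.act s (f x)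
  graded : ∀ (x : A.X) (hx : x ≠ A.zero) (hfx : f x ≠ B.zero),
      B.degX ⟨f x, hfx⟩ = A.degX ⟨x, hx⟩

theorem GrHom.map_zero {g : Grading Γ S} {A B : GrMod.{u, v, w} g} (φ : GrHom A B) :
    φ.f A.zero = B.zero := by
  have h : φ.f (A.act 0 A.zero) = B.act 0 (φ.f A.zero) := φ.map_act 0 A.zero
  rw [A.act_zero] at h
  rw [h, B.act_zero]

instance grModCategory (g : Grading Γ S) : Category (GrMod.{u, v, w} g) where
  Hom A B := GrHom A B
  id A :=
    { f := id
      map_act := fun _ _ => rfl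
      graded := fun _ _ _ => rfl }
  comp {A B C} φ ψ :=
    { f := fun x => ψ.f (φ.f x)
      map_act := fun s x => by
        show ψ.f (φ.f (A.act s x)) = C.act s (ψ.f (φ.f x))
        rw [φ.map_act, ψ.map_act]
      graded := fun x hx hfx => by
        have hφ : φ.f x ≠ B.zero := fun hzero =>
          hfx (show ψ.f (φ.f x) = C.zero by rw [hzero]; exact ψ.map_zero)
        exact (ψ.graded (φ.f x) hφ hfx).trans (φ.graded x hx hφ) }
  id_comp _ := rfl
  comp_id _ := rfl
  assoc _ _ _ := rfl

/-- An object of `Mod-(S#Γ)`: a unital pointed left `S#Γ`-set. -/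
structure SmMod (g : Grading Γ S) : Type max u w (v + 1) where
  X : Type v
  zero : X
  act : Smash Γ S → X → X
  act_mul : ∀ (a b : Smash Γ S) (x : X), act a (act b x) = act (smashMul g a b) x
  act_zero : ∀ x : X, act none x = zero
  unital : ∀ x : X, ∃ (a : Smash Γ S) (y : X), act a y = x

/-- A morphism of `Mod-(S#Γ)`: an `S#Γ`-map. -/
structure SmHom {g : Grading Γ S} (A B : SmMod.{u, v, w} g) : Type v where
  f : A.X → B.X
  map_act : ∀ (a : Smash Γ S) (x : A.X), f (A.act a x) = B.act a (f x)

instance smModCategory (g : Grading Γ S) : Category (SmMod.{u, v, w} g) where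
  Hom A B := SmHom A B
  id A := { f := id, map_act := fun _ _ => rfl }
  comp {A B C} φ ψ :=
    { f := fun x => ψ.f (φ.f x)
      map_act := fun a x => by
        show ψ.f (φ.f (A.act a x)) = C.act a (ψ.f (φ.f x))
        rw [φ.map_act, ψ.map_act] }
  id_comp _ := rfl
  comp_id _ := rfl
  assoc _ _ _ := rfl

/-- The shift functor `T_α` on `Gr-S`: `X(α)_β = X_{βα}`, i.e. the degree map becomes
`x ↦ deg(x) α⁻¹`. -/
def grShift (g : Grading Γ S) (α : Γ) : GrMod.{u, v, w} g ⥤ GrMod.{u, v, w} g where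
  obj A :=
    { X := A.X
      zero := A.zero
      act := A.act
      act_mul := A.act_mul
      act_zero := A.act_zero
      unital := A.unital
      degX := fun x => A.degX x * α⁻¹
      deg_act := fun s x hx h => by
        show A.degX ⟨A.act s x, h⟩ * α⁻¹ = g.deg s * (A.degX ⟨x, hx⟩ * α⁻¹)
        rw [A.deg_act s x hx h, mul_assoc] }
  map {A B} φ :=
    { f := φ.f
      map_act := φ.map_act
      graded := fun x hx hfx => by
        show B.degX ⟨φ.f x, hfx⟩ * α⁻¹ = A.degX ⟨x, hx⟩ * α⁻¹
        rw [φ.graded x hx hfx] }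
  map_id _ := rfl
  map_comp _ _ := rfl

/-- The automorphism `τ_α : s P_β ↦ s P_{βα}` of `S#Γ`. -/
def tau (α : Γ) : Smash Γ S → Smash Γ S :=
  Option.map fun p => (p.1, p.2 * α)

theorem tau_tau (α : Γ) (a : Smash Γ S) : tau α (tau α⁻¹ a) = a := by
  cases a with
  | none => rfl
  | some p => simp [tau]

theorem smashMul_tau {g : Grading Γ S} (α : Γ) (a b : Smash Γ S) :
    smashMul g (tau α a) (tau α b) = tau α (smashMul g a b) := by
  classical
  cases a with
  | none => rfl
  | some p =>
    cases b with
    | none => rfl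
    | some q =>
      have hc : p.2 * α * (q.2 * α)⁻¹ = p.2 * q.2⁻¹ := by group
      show (if h : p.1.1 * q.1.1 ≠ 0 ∧ g.deg q.1.1 = p.2 * α * (q.2 * α)⁻¹ then
          some ((⟨p.1.1 * q.1.1, h.1⟩ : {s : S // s ≠ 0}), q.2 * α) else none) =
        tau α (if h : p.1.1 * q.1.1 ≠ 0 ∧ g.deg q.1.1 = p.2 * q.2⁻¹ then
          some ((⟨p.1.1 * q.1.1, h.1⟩ : {s : S // s ≠ 0}), q.2) else none)
      rw [hc]
      split_ifs with h
      · rfl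
      · rfl

/-- The shift functor `T_α` on `Mod-(S#Γ)`, twisting the action by `τ_α`. -/
noncomputable def smShift (g : Grading Γ S) (α : Γ) :
    SmMod.{u, v, w} g ⥤ SmMod.{u, v, w} g where
  obj A :=
    { X := A.X
      zero := A.zero
      act := fun a x => A.act (tau α a) x
      act_mul := fun a b x => by
        show A.act (tau α a) (A.act (tau α b) x) = A.act (tau α (smashMul g a b)) x
        rw [A.act_mul, smashMul_tau]
      act_zero := fun x => A.act_zero x
      unital := fun x => by
        obtain ⟨a, y, hy⟩ := A.unital x
        exact ⟨tau α⁻¹ a, y, by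
          show A.act (tau α (tau α⁻¹ a)) y = x
          rw [tau_tau]; exact hy⟩ }
  map {A B} φ :=
    { f := φ.f
      map_act := fun a x => φ.map_act (tau α a) x }
  map_id _ := rfl
  map_comp _ _ := rfl

/-! ### Auxiliary material for the main theorem -/

theorem GrMod.act_zero' {g : Grading Γ S} (A : GrMod.{u, v, w} g) (s : S) :
    A.act s A.zero = A.zero := by
  conv_lhs => rw [← A.act_zero A.zero]
  rw [A.act_mul, mul_zero, A.act_zero]

theorem smashMul_none_right {g : Grading Γ S} (a : Smash Γ S) :
    smashMul g a none = none := by cases a <;> rfl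

theorem SmMod.act_zero' {g : Grading Γ S} (B : SmMod.{u, v, w} g) (a : Smash Γ S) :
    B.act a B.zero = B.zero := by
  conv_lhs => rw [← B.act_zero B.zero]
  rw [B.act_mul, smashMul_none_right, B.act_zero]

theorem SmHom.map_zero {g : Grading Γ S} {A B : SmMod.{u, v, w} g} (φ : SmHom A B) :
    φ.f A.zero = B.zero := by
  have h := φ.map_act none A.zero
  rw [A.act_zero, B.act_zero] at h
  exact h

theorem deg_idem {g : Grading Γ S} {u : S} (hu : u ≠ 0) (h : u * u = u) :
    g.deg u = 1 := by
  have h1 := g.deg_mul u u (by rw [h]; exact hu)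
  rw [h] at h1
  have h2 : g.deg u * 1 = g.deg u * g.deg u := by rw [mul_one]; exact h1
  exact (mul_left_cancel h2).symm

open Classical in
theorem smashMul_some {g : Grading Γ S} (s t : {x : S // x ≠ 0}) (α β : Γ) :
    smashMul g (some (s, α)) (some (t, β)) =
      if h : s.1 * t.1 ≠ 0 ∧ g.deg t.1 = α * β⁻¹ then
        some (⟨s.1 * t.1, h.1⟩, β) else none := rfl

open Classical in
/-- The `Smash` element `s P_α`, or `0` if `s = 0`. -/
noncomputable def toSmash (s : S) (α : Γ) : Smash Γ S :=
  if h : s ≠ 0 then some (⟨s, h⟩, α) else none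

theorem toSmash_pos {s : S} (hs : s ≠ 0) (α : Γ) :
    toSmash s α = some (⟨s, hs⟩, α) := dif_pos hs

theorem toSmash_zero (α : Γ) : toSmash (0 : S) α = none := dif_neg (fun h => h rfl)

theorem smashMul_unit {g : Grading Γ S} {s t : S} (hs : s ≠ 0) (ht : t ≠ 0) (β : Γ) :
    smashMul g (some (⟨s, hs⟩, g.deg t * β)) (some (⟨t, ht⟩, β)) = toSmash (s * t) β := by
  rw [smashMul_some]
  by_cases h : s * t = 0
  · rw [dif_neg (fun hc => hc.1 h), toSmash, dif_neg (fun h' => h' h)]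
  · rw [dif_pos ⟨h, (mul_inv_cancel_right _ _).symm⟩, toSmash, dif_pos h]

open Classical in
/-- The `S#Γ`-action on a graded `S`-set. -/
noncomputable def smAct {g : Grading Γ S} (A : GrMod.{u, v, w} g) :
    Smash Γ S → A.X → A.X
  | none, _ => A.zero
  | some p, x =>
      if h : ∃ hx : x ≠ A.zero, A.degX ⟨x, hx⟩ = p.2 then A.act p.1.1 x else A.zero

open Classical in
theorem smAct_some {g : Grading Γ S} (A : GrMod.{u, v, w} g)
    (p : {s : S // s ≠ 0} × Γ) (x : A.X) :
    smAct A (some p) x =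
      if h : ∃ hx : x ≠ A.zero, A.degX ⟨x, hx⟩ = p.2 then A.act p.1.1 x else A.zero := rfl

theorem smAct_mul {g : Grading Γ S} (A : GrMod.{u, v, w} g) (a b : Smash Γ S) (x : A.X) :
    smAct A a (smAct A b x) = smAct A (smashMul g a b) x := by
  cases a with
  | none => rfl
  | some p =>
    cases b with
    | none =>
      show smAct A (some p) A.zero = smAct A (smashMul g (some p) none) x
      rw [smashMul_none_right]
      show smAct A (some p) A.zero = A.zero
      rw [smAct_some, dif_neg]
      rintro ⟨h, -⟩
      exact h rfl
    | some q =>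
      rw [smashMul_some]
      by_cases hb : ∃ hx : x ≠ A.zero, A.degX ⟨x, hx⟩ = q.2
      · have hin : smAct A (some q) x = A.act q.1.1 x := by rw [smAct_some, dif_pos hb]
        rw [hin]
        obtain ⟨hx, hdx⟩ := hb
        by_cases hy : A.act q.1.1 x = A.zero
        · have hL : smAct A (some p) (A.act q.1.1 x) = A.zero := by
            rw [hy, smAct_some, dif_neg]
            rintro ⟨h, -⟩; exact h rfl
          rw [hL]
          by_cases hc : p.1.1 * q.1.1 ≠ 0 ∧ g.deg q.1.1 = p.2 * q.2⁻¹
          · rw [dif_pos hc, smAct_some, dif_pos ⟨hx, hdx⟩]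
            rw [← A.act_mul, hy, GrMod.act_zero']
          · rw [dif_neg hc]; rfl
        · have hdy := A.deg_act q.1.1 x hx hy
          by_cases hd : g.deg q.1.1 = p.2 * q.2⁻¹
          · have hL : smAct A (some p) (A.act q.1.1 x) = A.act p.1.1 (A.act q.1.1 x) := by
              rw [smAct_some, dif_pos ⟨hy, by rw [hdy, hdx, hd, inv_mul_cancel_right]⟩]
            rw [hL, A.act_mul]
            by_cases hc : p.1.1 * q.1.1 = 0
            · rw [dif_neg (fun hcc => hcc.1 hc)]
              show A.act (p.1.1 * q.1.1) x = A.zero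
              rw [hc, A.act_zero]
            · rw [dif_pos ⟨hc, hd⟩, smAct_some, dif_pos ⟨hx, hdx⟩]
          · have hL : smAct A (some p) (A.act q.1.1 x) = A.zero := by
              rw [smAct_some, dif_neg]
              rintro ⟨h, hdd⟩
              apply hd
              rw [← hdd, A.deg_act q.1.1 x hx h, hdx, mul_inv_cancel_right]
            rw [hL, dif_neg (fun hcc => hd hcc.2)]
            rfl
      · have hin : smAct A (some q) x = A.zero := by rw [smAct_some, dif_neg hb]
        rw [hin]
        have hL : smAct A (some p) A.zero = A.zero := by
          rw [smAct_some, dif_neg]; rintro ⟨h, -⟩; exact h rfl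
        rw [hL]
        by_cases hc : p.1.1 * q.1.1 ≠ 0 ∧ g.deg q.1.1 = p.2 * q.2⁻¹
        · rw [dif_pos hc, smAct_some, dif_neg hb]
        · rw [dif_neg hc]; rfl

theorem smAct_map {g : Grading Γ S} {A B : GrMod.{u, v, w} g} (φ : GrHom A B)
    (a : Smash Γ S) (x : A.X) :
    φ.f (smAct A a x) = smAct B a (φ.f x) := by
  cases a with
  | none => exact φ.map_zero
  | some p =>
    by_cases hx : ∃ h : x ≠ A.zero, A.degX ⟨x, h⟩ = p.2
    · rw [show smAct A (some p) x = A.act p.1.1 x from by rw [smAct_some, dif_pos hx]]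
      obtain ⟨hx0, hdx⟩ := hx
      rw [φ.map_act]
      by_cases hfx : φ.f x = B.zero
      · rw [hfx, GrMod.act_zero', smAct_some, dif_neg]
        rintro ⟨h, -⟩; exact h rfl
      · rw [smAct_some, dif_pos ⟨hfx, by rw [φ.graded x hx0 hfx, hdx]⟩]
    · rw [show smAct A (some p) x = A.zero from by rw [smAct_some, dif_neg hx]]
      rw [φ.map_zero, smAct_some]
      by_cases h2 : ∃ h : φ.f x ≠ B.zero, B.degX ⟨φ.f x, h⟩ = p.2
      · exfalso
        obtain ⟨hfx, hd⟩ := h2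
        have hx0 : x ≠ A.zero := fun h => hfx (by rw [h, φ.map_zero])
        exact hx ⟨hx0, by rw [← φ.graded x hx0 hfx, hd]⟩
      · rw [dif_neg h2]

theorem exists_local_unit {g : Grading Γ S} (hlu : HasLocalUnits S)
    (A : GrMod.{u, v, w} g) (x : A.X) (hx : x ≠ A.zero) :
    ∃ u : S, u ≠ 0 ∧ u * u = u ∧ A.act u x = x := by
  obtain ⟨s, y, hy⟩ := A.unital x
  have hs : s ≠ 0 := fun h => hx (by rw [← hy, h, A.act_zero])
  obtain ⟨u, v, huu, -, hus, -⟩ := hlu s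
  have hu0 : u ≠ 0 := fun h => hs (by rw [← hus, h, zero_mul])
  exact ⟨u, hu0, huu, by rw [← hy, A.act_mul, hus]⟩

/-- The object part of `F_#`. -/
noncomputable def Fobj (g : Grading Γ S) (hlu : HasLocalUnits S)
    (A : GrMod.{u, v, w} g) : SmMod.{u, v, w} g where
  X := A.X
  zero := A.zero
  act := smAct A
  act_mul := smAct_mul A
  act_zero := fun _ => rfl
  unital := fun x => by
    by_cases hx : x = A.zero
    · exact ⟨none, x, by rw [hx]; rfl⟩
    · obtain ⟨u, hu0, huu, hux⟩ := exists_local_unit hlu A x hx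
      exact ⟨some (⟨u, hu0⟩, A.degX ⟨x, hx⟩), x, by
        rw [smAct_some, dif_pos ⟨hx, rfl⟩]; exact hux⟩

/-- The functor `F_# : Gr-S ⥤ Mod-(S#Γ)`. -/
noncomputable def Ffun (g : Grading Γ S) (hlu : HasLocalUnits S) :
    GrMod.{u, v, w} g ⥤ SmMod.{u, v, w} g where
  obj := Fobj g hlu
  map φ := { f := φ.f, map_act := smAct_map φ }
  map_id _ := rfl
  map_comp _ _ := rfl

/-- `β` is a degree for `x` if some nonzero idempotent `u` satisfies `(u P_β) x = x`. -/
def IsDeg {g : Grading Γ S} (B : SmMod.{u, v, w} g) (x : B.X) (β : Γ) : Prop :=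
  ∃ u : S, ∃ hu : u ≠ 0, u * u = u ∧ B.act (some (⟨u, hu⟩, β)) x = x

theorem isDeg_unique {g : Grading Γ S} (B : SmMod.{u, v, w} g) {x : B.X}
    (hx : x ≠ B.zero) {β γ : Γ} (h1 : IsDeg B x β) (h2 : IsDeg B x γ) : β = γ := by
  obtain ⟨u, hu, huu, hua⟩ := h1
  obtain ⟨v, hv, hvv, hva⟩ := h2
  have hdv : g.deg v = 1 := deg_idem hv hvv
  by_contra hne
  have hsm : smashMul g (some (⟨u, hu⟩, β)) (some (⟨v, hv⟩, γ)) = none := by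
    rw [smashMul_some, dif_neg]
    rintro ⟨-, hd⟩
    rw [hdv] at hd
    exact hne (mul_inv_eq_one.mp hd.symm)
  have h3 : B.act (smashMul g (some (⟨u, hu⟩, β)) (some (⟨v, hv⟩, γ))) x = x := by
    rw [← B.act_mul, hva, hua]
  rw [hsm, B.act_zero] at h3
  exact hx h3.symm

theorem isDeg_act {g : Grading Γ S} (hlu : HasLocalUnits S) (B : SmMod.{u, v, w} g)
    (s : S) (hs : s ≠ 0) (β : Γ) (x : B.X) :
    IsDeg B (B.act (some (⟨s, hs⟩, β)) x) (g.deg s * β) := by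
  obtain ⟨u, v, huu, -, hus, -⟩ := hlu s
  have hu0 : u ≠ 0 := fun h => hs (by rw [← hus, h, zero_mul])
  refine ⟨u, hu0, huu, ?_⟩
  rw [B.act_mul, smashMul_some]
  have hc : u * s ≠ 0 ∧ g.deg s = g.deg s * β * β⁻¹ :=
    ⟨by rw [hus]; exact hs, (mul_inv_cancel_right _ _).symm⟩
  rw [dif_pos hc]
  have he : (⟨u * s, hc.1⟩ : {a : S // a ≠ 0}) = ⟨s, hs⟩ := Subtype.ext hus
  rw [he]

theorem isDeg_exists {g : Grading Γ S} (hlu : HasLocalUnits S) (B : SmMod.{u, v, w} g)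
    (x : B.X) (hx : x ≠ B.zero) : ∃ β : Γ, IsDeg B x β := by
  obtain ⟨a, y, hy⟩ := B.unital x
  cases a with
  | none => exact absurd (by rw [← hy]; exact B.act_zero y) hx
  | some p =>
    refine ⟨g.deg p.1.1 * p.2, ?_⟩
    rw [← hy]
    exact isDeg_act hlu B p.1.1 p.1.2 p.2 y

theorem isDeg_map {g : Grading Γ S} {A B : SmMod.{u, v, w} g} (φ : SmHom A B)
    {x : A.X} {β : Γ} (h : IsDeg A x β) : IsDeg B (φ.f x) β := by
  obtain ⟨u, hu, huu, ha⟩ := h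
  exact ⟨u, hu, huu, by rw [← φ.map_act, ha]⟩

open Classical in
/-- The degree of an element of an `S#Γ`-set. -/
noncomputable def degOf (hlu : HasLocalUnits S) {g : Grading Γ S}
    (B : SmMod.{u, v, w} g) (x : B.X) : Γ :=
  if h : x ≠ B.zero then Classical.choose (isDeg_exists hlu B x h) else 1

theorem degOf_spec (hlu : HasLocalUnits S) {g : Grading Γ S} (B : SmMod.{u, v, w} g)
    {x : B.X} (hx : x ≠ B.zero) : IsDeg B x (degOf hlu B x) := by
  unfold degOf
  rw [dif_pos hx]
  exact Classical.choose_spec (isDeg_exists hlu B x hx)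

theorem degOf_eq (hlu : HasLocalUnits S) {g : Grading Γ S} (B : SmMod.{u, v, w} g)
    {x : B.X} (hx : x ≠ B.zero) {β : Γ} (h : IsDeg B x β) : degOf hlu B x = β :=
  isDeg_unique B hx (degOf_spec hlu B hx) h

theorem degOf_map (hlu : HasLocalUnits S) {g : Grading Γ S}
    {A B : SmMod.{u, v, w} g} (φ : SmHom A B) {x : A.X}
    (hx : x ≠ A.zero) (hfx : φ.f x ≠ B.zero) :
    degOf hlu B (φ.f x) = degOf hlu A x :=
  degOf_eq hlu B hfx (isDeg_map φ (degOf_spec hlu A hx))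

theorem act_ne_deg (hlu : HasLocalUnits S) {g : Grading Γ S} (B : SmMod.{u, v, w} g)
    (p : {s : S // s ≠ 0} × Γ) (x : B.X) (hx : x ≠ B.zero)
    (hne : degOf hlu B x ≠ p.2) : B.act (some p) x = B.zero := by
  obtain ⟨u, hu, huu, ha⟩ := degOf_spec hlu B hx
  have hdu : g.deg u = 1 := deg_idem hu huu
  conv_lhs => rw [← ha]
  rw [B.act_mul]
  have hsm : smashMul g (some p) (some (⟨u, hu⟩, degOf hlu B x)) = none := by
    rw [show (some p : Smash Γ S) = some (p.1, p.2) from rfl, smashMul_some, dif_neg]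
    rintro ⟨-, hd⟩
    rw [hdu] at hd
    exact hne (mul_inv_eq_one.mp hd.symm).symm
  rw [hsm, B.act_zero]

/-- The `S`-action on an `S#Γ`-set. -/
noncomputable def grAct (hlu : HasLocalUnits S) {g : Grading Γ S}
    (B : SmMod.{u, v, w} g) (s : S) (x : B.X) : B.X :=
  B.act (toSmash s (degOf hlu B x)) x

theorem grAct_mul (hlu : HasLocalUnits S) {g : Grading Γ S} (B : SmMod.{u, v, w} g)
    (s t : S) (x : B.X) :
    grAct hlu B s (grAct hlu B t x) = grAct hlu B (s * t) x := by
  unfold grAct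
  by_cases hx : x = B.zero
  · simp only [hx, SmMod.act_zero']
  by_cases ht : t = 0
  · simp only [ht, mul_zero, toSmash_zero, B.act_zero, SmMod.act_zero']
  by_cases hs : s = 0
  · simp only [hs, zero_mul, toSmash_zero, B.act_zero, SmMod.act_zero']
  rw [toSmash_pos ht]
  set y := B.act (some (⟨t, ht⟩, degOf hlu B x)) x with hy
  by_cases hy0 : y = B.zero
  · rw [hy0, SmMod.act_zero', ← smashMul_unit hs ht (degOf hlu B x), ← B.act_mul,
      ← hy, hy0, SmMod.act_zero']
  · have hdy : degOf hlu B y = g.deg t * degOf hlu B x :=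
      degOf_eq hlu B hy0 (by rw [hy]; exact isDeg_act hlu B t ht (degOf hlu B x) x)
    rw [hdy, toSmash_pos hs, hy, B.act_mul, smashMul_unit hs ht]

theorem grAct_map (hlu : HasLocalUnits S) {g : Grading Γ S}
    {A B : SmMod.{u, v, w} g} (φ : SmHom A B) (s : S) (x : A.X) :
    φ.f (grAct hlu A s x) = grAct hlu B s (φ.f x) := by
  show φ.f (A.act (toSmash s (degOf hlu A x)) x)
      = B.act (toSmash s (degOf hlu B (φ.f x))) (φ.f x)
  rw [φ.map_act]
  by_cases hfx : φ.f x = B.zero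
  · rw [hfx, SmMod.act_zero', SmMod.act_zero']
  · have hx : x ≠ A.zero := fun h => hfx (by rw [h, φ.map_zero])
    rw [degOf_map hlu φ hx hfx]

/-- The object part of the inverse functor. -/
noncomputable def Gobj (g : Grading Γ S) (hlu : HasLocalUnits S)
    (B : SmMod.{u, v, w} g) : GrMod.{u, v, w} g where
  X := B.X
  zero := B.zero
  act := grAct hlu B
  act_mul := grAct_mul hlu B
  act_zero := fun x => by
    show B.act (toSmash 0 _) x = B.zero
    rw [toSmash_zero, B.act_zero]
  unital := fun x => by
    by_cases hx : x = B.zero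
    · exact ⟨0, x, by
        show B.act (toSmash 0 _) x = x
        rw [toSmash_zero, B.act_zero, hx]⟩
    · obtain ⟨u, hu0, huu, hux⟩ := degOf_spec hlu B hx
      exact ⟨u, x, by
        show B.act (toSmash u _) x = x
        rw [toSmash_pos hu0]; exact hux⟩
  degX := fun x => degOf hlu B x.1
  deg_act := fun s x hx h => by
    have hs : s ≠ 0 := by
      rintro rfl
      exact h (by
        show B.act (toSmash 0 _) x = B.zero
        rw [toSmash_zero, B.act_zero])
    have h' : B.act (some (⟨s, hs⟩, degOf hlu B x)) x ≠ B.zero := by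
      rw [← toSmash_pos hs]; exact h
    show degOf hlu B (B.act (toSmash s (degOf hlu B x)) x) = _
    rw [toSmash_pos hs]
    exact degOf_eq hlu B h' (isDeg_act hlu B s hs (degOf hlu B x) x)

/-- The inverse functor `Mod-(S#Γ) ⥤ Gr-S`. -/
noncomputable def Gfun (g : Grading Γ S) (hlu : HasLocalUnits S) :
    SmMod.{u, v, w} g ⥤ GrMod.{u, v, w} g where
  obj := Gobj g hlu
  map {A B} φ :=
    { f := φ.f
      map_act := grAct_map hlu φ
      graded := fun x hx hfx => degOf_map hlu φ hx hfx }
  map_id _ := rfl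
  map_comp _ _ := rfl

theorem grHom_ext {g : Grading Γ S} {A B : GrMod.{u, v, w} g} {φ ψ : GrHom A B}
    (h : φ.f = ψ.f) : φ = ψ := by
  cases φ; cases ψ; cases h; rfl

theorem smHom_ext {g : Grading Γ S} {A B : SmMod.{u, v, w} g} {φ ψ : SmHom A B}
    (h : φ.f = ψ.f) : φ = ψ := by
  cases φ; cases ψ; cases h; rfl

theorem eqToHom_f_gr {g : Grading Γ S} {A B : GrMod.{u, v, w} g} (h : A = B)
    (x : A.X) : (eqToHom h).f x = cast (congrArg GrMod.X h) x := by
  subst h; rfl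

theorem eqToHom_f_sm {g : Grading Γ S} {A B : SmMod.{u, v, w} g} (h : A = B)
    (x : A.X) : (eqToHom h).f x = cast (congrArg SmMod.X h) x := by
  subst h; rfl

theorem grMod_mk_eq {g : Grading Γ S} {X : Type v} {z : X} {act act' : S → X → X}
    {dX dX' : {x : X // x ≠ z} → Γ}
    {am : ∀ s t x, act s (act t x) = act (s * t) x}
    {az : ∀ x, act 0 x = z}
    {un : ∀ x : X, ∃ s y, act s y = x}
    {da : ∀ (s : S) (x : X) (hx : x ≠ z) (h : act s x ≠ z),
        dX ⟨act s x, h⟩ = g.deg s * dX ⟨x, hx⟩}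
    {am' : ∀ s t x, act' s (act' t x) = act' (s * t) x}
    {az' : ∀ x, act' 0 x = z}
    {un' : ∀ x : X, ∃ s y, act' s y = x}
    {da' : ∀ (s : S) (x : X) (hx : x ≠ z) (h : act' s x ≠ z),
        dX' ⟨act' s x, h⟩ = g.deg s * dX' ⟨x, hx⟩}
    (ha : act = act') (hd : dX = dX') :
    GrMod.mk X z act am az un dX da = GrMod.mk X z act' am' az' un' dX' da' := by
  subst ha; subst hd; rfl

theorem smMod_mk_eq {g : Grading Γ S} {X : Type v} {z : X}
    {act act' : Smash Γ S → X → X}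
    {am : ∀ a b x, act a (act b x) = act (smashMul g a b) x}
    {az : ∀ x, act none x = z}
    {un : ∀ x : X, ∃ a y, act a y = x}
    {am' : ∀ a b x, act' a (act' b x) = act' (smashMul g a b) x}
    {az' : ∀ x, act' none x = z}
    {un' : ∀ x : X, ∃ a y, act' a y = x}
    (ha : act = act') :
    SmMod.mk X z act am az un = SmMod.mk X z act' am' az' un' := by
  subst ha; rfl

theorem degOf_Fobj {g : Grading Γ S} (hlu : HasLocalUnits S) (A : GrMod.{u, v, w} g)
    (x : A.X) (hx : x ≠ A.zero) :
    degOf hlu (Fobj g hlu A) x = A.degX ⟨x, hx⟩ := by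
  apply degOf_eq hlu _ hx
  obtain ⟨u, hu0, huu, hux⟩ := exists_local_unit hlu A x hx
  refine ⟨u, hu0, huu, ?_⟩
  show smAct A (some (⟨u, hu0⟩, A.degX ⟨x, hx⟩)) x = x
  rw [smAct_some, dif_pos ⟨hx, rfl⟩]
  exact hux

theorem grAct_Fobj {g : Grading Γ S} (hlu : HasLocalUnits S) (A : GrMod.{u, v, w} g)
    (s : S) (x : A.X) :
    grAct hlu (Fobj g hlu A) s x = A.act s x := by
  by_cases hx : x = A.zero
  · rw [hx, GrMod.act_zero']
    exact SmMod.act_zero' (Fobj g hlu A) _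
  · by_cases hs : s = 0
    · rw [hs]
      show smAct A (toSmash 0 _) x = A.act 0 x
      rw [A.act_zero, toSmash_zero]
      rfl
    · show smAct A (toSmash s (degOf hlu (Fobj g hlu A) x)) x = A.act s x
      rw [toSmash_pos hs, degOf_Fobj hlu A x hx, smAct_some, dif_pos ⟨hx, rfl⟩]

theorem smAct_Gobj {g : Grading Γ S} (hlu : HasLocalUnits S) (B : SmMod.{u, v, w} g)
    (a : Smash Γ S) (x : B.X) :
    smAct (Gobj g hlu B) a x = B.act a x := by
  cases a with
  | none => rw [B.act_zero]; rfl
  | some p =>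
    rw [smAct_some (Gobj g hlu B) p x]
    by_cases hc : ∃ hx : x ≠ (Gobj g hlu B).zero, (Gobj g hlu B).degX ⟨x, hx⟩ = p.2
    · obtain ⟨hx, hd⟩ := hc
      rw [dif_pos ⟨hx, hd⟩]
      show B.act (toSmash p.1.1 (degOf hlu B x)) x = B.act (some p) x
      rw [toSmash_pos p.1.2]
      have hd' : degOf hlu B x = p.2 := hd
      rw [hd']
    · refine (dif_neg hc).trans ?_
      by_cases hx : x = B.zero
      · rw [hx, SmMod.act_zero']; rfl
      · have hne : degOf hlu B x ≠ p.2 := fun h => hc ⟨hx, h⟩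
        exact (act_ne_deg hlu B p x hx hne).symm

open Classical in
theorem smAct_shift {g : Grading Γ S} (A : GrMod.{u, v, w} g) (α : Γ)
    (a : Smash Γ S) (x : A.X) :
    smAct ((grShift g α).obj A) a x = smAct A (tau α a) x := by
  cases a with
  | none => rfl
  | some p =>
    show (if h : ∃ hx : x ≠ A.zero, A.degX ⟨x, hx⟩ * α⁻¹ = p.2 then A.act p.1.1 x
        else A.zero)
      = (if h : ∃ hx : x ≠ A.zero, A.degX ⟨x, hx⟩ = p.2 * α then A.act p.1.1 x
        else A.zero)
    have hiff : (∃ hx : x ≠ A.zero, A.degX ⟨x, hx⟩ * α⁻¹ = p.2) ↔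
        (∃ hx : x ≠ A.zero, A.degX ⟨x, hx⟩ = p.2 * α) := by
      refine exists_congr fun hx => ⟨fun h => ?_, fun h => ?_⟩
      · rw [← h, inv_mul_cancel_right]
      · rw [h, mul_inv_cancel_right]
    by_cases h : ∃ hx : x ≠ A.zero, A.degX ⟨x, hx⟩ = p.2 * α
    · rw [dif_pos (hiff.mpr h), dif_pos h]
    · rw [dif_neg (fun hh => h (hiff.mp hh)), dif_neg h]


/-- Theorem `smashthrm` (Cohen–Montgomery for semigroups): for a `Γ`-graded semigroup
`S` with local units, there is an isomorphism of categories
`F_# : Gr-S → Mod-(S#Γ)` commuting with the shift functors `T_α` on both sides. -/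
theorem smash_product_category_iso (g : Grading Γ S) (hlu : HasLocalUnits S) :
    ∃ (F : GrMod.{u, v, w} g ⥤ SmMod.{u, v, w} g)
      (G : SmMod.{u, v, w} g ⥤ GrMod.{u, v, w} g),
      F ⋙ G = 𝟭 (GrMod.{u, v, w} g) ∧ G ⋙ F = 𝟭 (SmMod.{u, v, w} g) ∧
      ∀ α : Γ, grShift g α ⋙ F = F ⋙ smShift g α := by
  classical
  refine ⟨Ffun g hlu, Gfun g hlu, ?_, ?_, ?_⟩
  · have hobj : ∀ A : GrMod.{u, v, w} g, (Ffun g hlu ⋙ Gfun g hlu).obj A = A := fun A =>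
      grMod_mk_eq (funext fun s => funext fun x => grAct_Fobj hlu A s x)
        (funext fun x => degOf_Fobj hlu A x.1 x.2)
    refine CategoryTheory.Functor.ext hobj ?_
    intro A B φ
    apply grHom_ext
    funext x
    show φ.f x = (eqToHom (hobj B).symm).f (φ.f ((eqToHom (hobj A)).f x))
    rw [eqToHom_f_gr, eqToHom_f_gr]
    rfl
  · have hobj : ∀ B : SmMod.{u, v, w} g, (Gfun g hlu ⋙ Ffun g hlu).obj B = B := fun B =>
      smMod_mk_eq (funext fun a => funext fun x => smAct_Gobj hlu B a x)
    refine CategoryTheory.Functor.ext hobj ?_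
    intro A B φ
    apply smHom_ext
    funext x
    show φ.f x = (eqToHom (hobj B).symm).f (φ.f ((eqToHom (hobj A)).f x))
    rw [eqToHom_f_sm, eqToHom_f_sm]
    rfl
  · intro α
    have hobj : ∀ A : GrMod.{u, v, w} g,
        (grShift g α ⋙ Ffun g hlu).obj A = (Ffun g hlu ⋙ smShift g α).obj A := fun A =>
      smMod_mk_eq (funext fun a => funext fun x => smAct_shift A α a x)
    refine CategoryTheory.Functor.ext hobj ?_
    intro A B φ
    apply smHom_ext
    funext x
    show φ.f x = (eqToHom (hobj B).symm).f (φ.f ((eqToHom (hobj A)).f x))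
    rw [eqToHom_f_sm]
    refine Eq.trans ?_ (eqToHom_f_sm (hobj B).symm _).symm
    rfl
end

section
/- Let E be a directed graph with a weight function ω : E¹ → Γ and let Ē be the covering graph of E with respect to ω. Then the assignments v_α ↦ v P_α, e_α ↦ e P_{ω(e)⁻¹α}, e_α⁻¹ ↦ e⁻¹ P_α induce a graded semigroup isomorphism φ : S(Ē) → S(E)#Γ. -/
/-! Graph inverse semigroups (modelled concretely, see §7 of the paper), covering
graphs, and smash products.  A graph is given by `src rng : E → V`; a nonzero element
of `S(E)` is uniquely `x y⁻¹` for paths `x, y` with `r(x) = r(y)` (pairs of (starting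
vertex, edge list) pairs); `none` is the zero, and `ValidGIS` carves out `S(E)` inside
the raw carrier. -/

variable {V : Type u} {E : Type u}

/-- `goodFrom src rng v l`: the edge list `l` forms a path starting at the vertex `v`. -/
def goodFrom (src rng : E → V) : V → List E → Prop
  | _, [] => True
  | v, e :: l => src e = v ∧ goodFrom src rng (rng e) l

/-- The end (range) vertex of the path starting at `v` with edge list `l`. -/
def pend (rng : E → V) : V → List E → V
  | v, [] => v
  | _, e :: l => pend rng (rng e) l

/-- Raw carrier for the graph inverse semigroup `S(E)`. -/
abbrev RawGIS (V E : Type u) : Type u := Option ((V × List E) × (V × List E))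

/-- Validity of a raw element. -/
def ValidGIS (src rng : E → V) : RawGIS V E → Prop
  | none => True
  | some (x, y) =>
      goodFrom src rng x.1 x.2 ∧ goodFrom src rng y.1 y.2 ∧
        pend rng x.1 x.2 = pend rng y.1 y.2

open Classical in
/-- Multiplication in `S(E)`. -/
noncomputable def gmul : RawGIS V E → RawGIS V E → RawGIS V E
  | some (x, y), some (u, w) =>
      if y.1 = u.1 ∧ y.2 <+: u.2 then
        some ((x.1, x.2 ++ u.2.drop y.2.length), w)
      else if u.1 = y.1 ∧ u.2 <+: y.2 then
        some (x, (w.1, w.2 ++ y.2.drop u.2.length))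
      else none
  | _, _ => none

/-- The weight of a path: the product of the weights of its edges. -/
def wpath {Γ : Type u} [Group Γ] (ω : E → Γ) (l : List E) : Γ := (l.map ω).prod

/-- The `Γ`-grading of `S(E)` induced by a weight map `ω : E¹ → Γ`:
`deg (x y⁻¹) = ω(x) ω(y)⁻¹`. -/
def degW {Γ : Type u} [Group Γ] (ω : E → Γ) : RawGIS V E → Γ
  | some (x, y) => wpath ω x.2 * (wpath ω y.2)⁻¹
  | none => 1

/-- Raw carrier for the smash product `S(E)#Γ`: symbols `s P_α` with `s` a (raw)
nonzero element of `S(E)` and `α ∈ Γ`, plus the zero `none`. -/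
abbrev SmashGIS (V E Γ : Type u) : Type u :=
  Option (((V × List E) × (V × List E)) × Γ)

/-- Validity in `S(E)#Γ`. -/
def ValidSmash (src rng : E → V) {Γ : Type u} : SmashGIS V E Γ → Prop
  | none => True
  | some (p, _) => ValidGIS src rng (some p)

open Classical in
/-- Multiplication in `S(E)#Γ`: `(s P_α)(t P_β) = st P_β` if `st ≠ 0` and
`deg t = αβ⁻¹`, else `0`. -/
noncomputable def smashGISMul {Γ : Type u} [Group Γ] (ω : E → Γ) :
    SmashGIS V E Γ → SmashGIS V E Γ → SmashGIS V E Γ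
  | some (p, α), some (q, β) =>
      match gmul (some p) (some q) with
      | some pq => if degW ω (some q) = α * β⁻¹ then some (pq, β) else none
      | none => none
  | _, _ => none

/-- The grading of `S(E)#Γ`: `deg (s P_α) = deg s`. -/
def degSmash {Γ : Type u} [Group Γ] (ω : E → Γ) : SmashGIS V E Γ → Γ
  | some (p, _) => degW ω (some p)
  | none => 1

/-- The map `φ : S(Ē) → S(E)#Γ` induced by `v_α ↦ v P_α`, `e_α ↦ e P_{ω(e)⁻¹α}`,
`e_α⁻¹ ↦ e⁻¹ P_α`.  On a general element `x̄ ȳ⁻¹` of `S(Ē)` (where `Ē` is the covering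
graph, with vertices `V × Γ` and edges `E × Γ`) it forgets the `Γ`-coordinates of the
two paths and records the `Γ`-coordinate of the starting vertex of `ȳ`. -/
def coverProj {V E Γ : Type u} : RawGIS (V × Γ) (E × Γ) → SmashGIS V E Γ :=
  Option.map fun p =>
    (((p.1.1.1, p.1.2.map Prod.fst), (p.2.1.1, p.2.2.map Prod.fst)), p.2.1.2)

section CoverLemmas

variable {V E Γ : Type u} [Group Γ] (src rng : E → V) (ω : E → Γ)

/-- The unique lift of a path in `E` to the covering graph, given the starting
`Γ`-coordinate. -/
def liftL (ω : E → Γ) : Γ → List E → List (E × Γ)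
  | _, [] => []
  | α, e :: l => (e, α) :: liftL ω ((ω e)⁻¹ * α) l

@[simp] lemma map_fst_liftL (α : Γ) (l : List E) : (liftL ω α l).map Prod.fst = l := by
  induction l generalizing α with
  | nil => rfl
  | cons e l ih => simp [liftL, ih]

lemma wpath_nil : wpath ω ([] : List E) = 1 := rfl

lemma wpath_cons (e : E) (l : List E) : wpath ω (e :: l) = ω e * wpath ω l := by
  simp [wpath]

lemma wpath_append (l1 l2 : List E) :
    wpath ω (l1 ++ l2) = wpath ω l1 * wpath ω l2 := by
  simp [wpath]

lemma good_eq_liftL {v : V} {α : Γ} {l : List (E × Γ)}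
    (h : goodFrom (fun e => (src e.1, e.2)) (fun e => (rng e.1, (ω e.1)⁻¹ * e.2))
      (v, α) l) :
    l = liftL ω α (l.map Prod.fst) ∧ goodFrom src rng v (l.map Prod.fst) := by
  induction l generalizing v α with
  | nil => exact ⟨rfl, trivial⟩
  | cons e l ih =>
      obtain ⟨e1, e2⟩ := e
      obtain ⟨h1, h2⟩ := h
      obtain ⟨hv, hα⟩ := Prod.mk.injEq _ _ _ _ ▸ h1
      subst hv hα
      obtain ⟨ih1, ih2⟩ := ih h2
      exact ⟨by simpa [liftL] using ih1, ⟨rfl, ih2⟩⟩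

lemma good_liftL {v : V} (α : Γ) {l : List E} (h : goodFrom src rng v l) :
    goodFrom (fun e : E × Γ => (src e.1, e.2)) (fun e => (rng e.1, (ω e.1)⁻¹ * e.2))
      (v, α) (liftL ω α l) := by
  induction l generalizing v α with
  | nil => trivial
  | cons e l ih =>
      exact ⟨by simp [liftL, h.1], ih _ h.2⟩

lemma pend_liftL (v : V) (α : Γ) (l : List E) :
    pend (fun e : E × Γ => (rng e.1, (ω e.1)⁻¹ * e.2)) (v, α) (liftL ω α l)
      = (pend rng v l, (wpath ω l)⁻¹ * α) := by
  induction l generalizing v α with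
  | nil => simp [liftL, pend, wpath]
  | cons e l ih => simp [liftL, pend, ih, wpath_cons, mul_assoc]

lemma liftL_append (α : Γ) (l1 l2 : List E) :
    liftL ω α (l1 ++ l2) = liftL ω α l1 ++ liftL ω ((wpath ω l1)⁻¹ * α) l2 := by
  induction l1 generalizing α with
  | nil => simp [liftL, wpath]
  | cons e l ih => simp [liftL, ih, wpath_cons, mul_assoc]

lemma liftL_prefix_iff (α : Γ) (l1 l2 : List E) :
    liftL ω α l1 <+: liftL ω α l2 ↔ l1 <+: l2 := by
  constructor
  · intro h
    simpa using h.map Prod.fst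
  · rintro ⟨t, rfl⟩
    rw [liftL_append]
    exact ⟨_, rfl⟩

/-- Unpacking validity of a nonzero element of `S(Ē)`. -/
lemma valid_unpack {vx vy : V} {αx αy : Γ} {lx ly : List (E × Γ)}
    (h : ValidGIS (fun e => (src e.1, e.2)) (fun e => (rng e.1, (ω e.1)⁻¹ * e.2))
      (some (((vx, αx), lx), ((vy, αy), ly)))) :
    lx = liftL ω αx (lx.map Prod.fst) ∧ ly = liftL ω αy (ly.map Prod.fst) ∧
      goodFrom src rng vx (lx.map Prod.fst) ∧ goodFrom src rng vy (ly.map Prod.fst) ∧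
      pend rng vx (lx.map Prod.fst) = pend rng vy (ly.map Prod.fst) ∧
      (wpath ω (lx.map Prod.fst))⁻¹ * αx = (wpath ω (ly.map Prod.fst))⁻¹ * αy := by
  obtain ⟨hgx, hgy, hp⟩ := h
  obtain ⟨hx1, hx2⟩ := good_eq_liftL src rng ω hgx
  obtain ⟨hy1, hy2⟩ := good_eq_liftL src rng ω hgy
  rw [hx1, hy1, pend_liftL, pend_liftL] at hp
  obtain ⟨hp1, hp2⟩ := Prod.mk.injEq _ _ _ _ ▸ hp
  exact ⟨hx1, hy1, hx2, hy2, hp1, hp2⟩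

lemma gmul_eq_pos1 {x y u w : V × List E}
    (h : y.1 = u.1 ∧ y.2 <+: u.2) :
    gmul (some (x, y)) (some (u, w))
      = some ((x.1, x.2 ++ u.2.drop y.2.length), w) := by
  simp only [gmul]
  rw [if_pos h]

lemma gmul_eq_pos2 {x y u w : V × List E}
    (h1 : ¬(y.1 = u.1 ∧ y.2 <+: u.2)) (h2 : u.1 = y.1 ∧ u.2 <+: y.2) :
    gmul (some (x, y)) (some (u, w))
      = some (x, (w.1, w.2 ++ y.2.drop u.2.length)) := by
  simp only [gmul]
  rw [if_neg h1, if_pos h2]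

lemma gmul_eq_none {x y u w : V × List E}
    (h1 : ¬(y.1 = u.1 ∧ y.2 <+: u.2)) (h2 : ¬(u.1 = y.1 ∧ u.2 <+: y.2)) :
    gmul (some (x, y)) (some (u, w)) = none := by
  simp only [gmul]
  rw [if_neg h1, if_neg h2]

lemma smash_eq_some {Γ : Type u} [Group Γ] (ω : E → Γ)
    {p q pq : (V × List E) × (V × List E)} {α β : Γ}
    (h : gmul (some p) (some q) = some pq) (hdeg : degW ω (some q) = α * β⁻¹) :
    smashGISMul ω (some (p, α)) (some (q, β)) = some (pq, β) := by
  simp only [smashGISMul, h, hdeg, if_pos]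

lemma smash_eq_none1 {Γ : Type u} [Group Γ] (ω : E → Γ)
    {p q : (V × List E) × (V × List E)} {α β : Γ}
    (h : gmul (some p) (some q) = none) :
    smashGISMul ω (some (p, α)) (some (q, β)) = none := by
  simp only [smashGISMul, h]

lemma smash_eq_none2 {Γ : Type u} [Group Γ] (ω : E → Γ)
    {p q pq : (V × List E) × (V × List E)} {α β : Γ}
    (h : gmul (some p) (some q) = some pq) (hdeg : ¬ degW ω (some q) = α * β⁻¹) :
    smashGISMul ω (some (p, α)) (some (q, β)) = none := by
  simp only [smashGISMul, h, hdeg, if_neg, if_false]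

end CoverLemmas

/-- Theorem `gdhfthfhfhdsjje`: for a graph `E` with weight function `ω : E¹ → Γ` and
covering graph `Ē` (vertices `V × Γ`, edges `E × Γ`, `s(e_α) = s(e)_α`,
`r(e_α) = r(e)_{ω(e)⁻¹α}`), the assignments `v_α ↦ v P_α`, `e_α ↦ e P_{ω(e)⁻¹α}`,
`e_α⁻¹ ↦ e⁻¹ P_α` induce a graded semigroup isomorphism `S(Ē) ≅ S(E)#Γ`: the induced
map `coverProj` is a degree-preserving multiplicative bijection from `S(Ē)` onto
`S(E)#Γ`. -/
theorem covering_graph_smash_iso {V E Γ : Type u} [Group Γ]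
    (src rng : E → V) (ω : E → Γ) :
    Set.BijOn coverProj
        {a : RawGIS (V × Γ) (E × Γ) |
          ValidGIS (fun e => (src e.1, e.2)) (fun e => (rng e.1, (ω e.1)⁻¹ * e.2)) a}
        {b : SmashGIS V E Γ | ValidSmash src rng b} ∧
    (∀ a b : RawGIS (V × Γ) (E × Γ),
        ValidGIS (fun e => (src e.1, e.2)) (fun e => (rng e.1, (ω e.1)⁻¹ * e.2)) a →
        ValidGIS (fun e => (src e.1, e.2)) (fun e => (rng e.1, (ω e.1)⁻¹ * e.2)) b →
        coverProj (gmul a b) = smashGISMul ω (coverProj a) (coverProj b)) ∧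
    (∀ a : RawGIS (V × Γ) (E × Γ),
        ValidGIS (fun e => (src e.1, e.2)) (fun e => (rng e.1, (ω e.1)⁻¹ * e.2)) a →
        a ≠ none →
        degSmash ω (coverProj a) = degW (fun e => ω e.1) a) := by
  refine ⟨⟨?_, ?_, ?_⟩, ?_, ?_⟩
  · -- MapsTo
    rintro a ha
    match a with
    | none => trivial
    | some (((vx, αx), lx), ((vy, αy), ly)) =>
      obtain ⟨_, _, hgx, hgy, hp, _⟩ := valid_unpack src rng ω ha
      exact ⟨hgx, hgy, hp⟩
  · -- InjOn
    rintro a ha b hb hab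
    match a, b with
    | none, none => rfl
    | none, some _ => simp [coverProj] at hab
    | some _, none => simp [coverProj] at hab
    | some (((vx, αx), lx), ((vy, αy), ly)),
      some (((vx', αx'), lx'), ((vy', αy'), ly')) =>
      simp only [coverProj, Option.map_some, Option.some.injEq, Prod.mk.injEq] at hab
      obtain ⟨⟨⟨hvx, hlx⟩, ⟨hvy, hly⟩⟩, hαy⟩ := hab
      subst hvx hvy hαy
      obtain ⟨ex1, ey1, _, _, _, he⟩ := valid_unpack src rng ω ha
      obtain ⟨ex1', ey1', _, _, _, he'⟩ := valid_unpack src rng ω hb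
      rw [← hlx, ← hly] at he'
      have hαx : αx = αx' := mul_left_cancel (he.trans he'.symm)
      subst hαx
      have h2 : ly = ly' := by rw [ey1, ey1', hly]
      have h3 : lx = lx' := by rw [ex1, ex1', hlx]
      rw [h2, h3]
  · -- SurjOn
    rintro b hb
    match b with
    | none => exact ⟨none, trivial, rfl⟩
    | some (((x1, lx), (y1, ly)), α) =>
      obtain ⟨hgx, hgy, hp⟩ := hb
      refine ⟨some (((x1, wpath ω lx * (wpath ω ly)⁻¹ * α),
          liftL ω (wpath ω lx * (wpath ω ly)⁻¹ * α) lx),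
          ((y1, α), liftL ω α ly)), ⟨good_liftL src rng ω _ hgx,
          good_liftL src rng ω _ hgy, ?_⟩, ?_⟩
      · rw [pend_liftL, pend_liftL, hp]
        congr 1
        group
      · simp [coverProj]
  · -- multiplicativity
    rintro a b ha hb
    match a, b with
    | none, none => rfl
    | none, some _ => rfl
    | some _, none => rfl
    | some (((vx, αx), lx), ((vy, αy), ly)),
      some (((vu, αu), lu), ((vw, αw), lw)) =>
      obtain ⟨ex, ey, hgx, hgy, hpa, hda⟩ := valid_unpack src rng ω ha
      obtain ⟨eu, ew, hgu, hgw, hpb, hdb⟩ := valid_unpack src rng ω hb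
      rw [inv_mul_eq_iff_eq_mul] at hdb
      have hval : αu * αw⁻¹
          = wpath ω (lu.map Prod.fst) * (wpath ω (lw.map Prod.fst))⁻¹ := by
        rw [hdb]
        simp [mul_assoc]
      have hcond : (wpath ω (lu.map Prod.fst) * (wpath ω (lw.map Prod.fst))⁻¹
          = αy * αw⁻¹) ↔ αu = αy := by
        rw [← hval, mul_left_inj]
      have hC1 : ((vy, αy) = (vu, αu) ∧ ly <+: lu)
          ↔ (vy = vu ∧ ly.map Prod.fst <+: lu.map Prod.fst ∧ αy = αu) := by
        constructor
        · rintro ⟨h1, h2⟩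
          obtain ⟨h1a, h1b⟩ := Prod.mk.injEq _ _ _ _ ▸ h1
          exact ⟨h1a, by simpa using h2.map Prod.fst, h1b⟩
        · rintro ⟨h1, h2, h3⟩
          refine ⟨by rw [h1, h3], ?_⟩
          rw [ey, eu, ← h3]
          exact (liftL_prefix_iff ω αy _ _).2 h2
      have hC2 : ((vu, αu) = (vy, αy) ∧ lu <+: ly)
          ↔ (vu = vy ∧ lu.map Prod.fst <+: ly.map Prod.fst ∧ αu = αy) := by
        constructor
        · rintro ⟨h1, h2⟩
          obtain ⟨h1a, h1b⟩ := Prod.mk.injEq _ _ _ _ ▸ h1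
          exact ⟨h1a, by simpa using h2.map Prod.fst, h1b⟩
        · rintro ⟨h1, h2, h3⟩
          refine ⟨by rw [h1, h3], ?_⟩
          rw [ey, eu, h3]
          exact (liftL_prefix_iff ω αy _ _).2 h2
      simp only [coverProj, Option.map_some]
      by_cases h1 : vy = vu ∧ ly.map Prod.fst <+: lu.map Prod.fst
      · by_cases hα : αy = αu
        · rw [gmul_eq_pos1 (hC1.2 ⟨h1.1, h1.2, hα⟩),
            smash_eq_some ω (gmul_eq_pos1 h1) (by simpa [degW] using hcond.2 hα.symm)]
          simp [coverProj, List.map_append, List.map_drop]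
        · rw [gmul_eq_none (fun h => hα (hC1.1 h).2.2)
              (fun h => hα ((hC2.1 h).2.2).symm),
            smash_eq_none2 ω (gmul_eq_pos1 h1)
              (by simpa [degW, hcond] using fun h => hα h.symm)]
          rfl
      · by_cases h2 : vu = vy ∧ lu.map Prod.fst <+: ly.map Prod.fst
        · by_cases hα : αu = αy
          · rw [gmul_eq_pos2 (fun h => h1 ⟨(hC1.1 h).1, (hC1.1 h).2.1⟩)
                (hC2.2 ⟨h2.1, h2.2, hα⟩),
              smash_eq_some ω (gmul_eq_pos2 h1 h2) (by simpa [degW] using hcond.2 hα)]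
            simp [coverProj, List.map_append, List.map_drop]
          · rw [gmul_eq_none (fun h => h1 ⟨(hC1.1 h).1, (hC1.1 h).2.1⟩)
                (fun h => hα (hC2.1 h).2.2),
              smash_eq_none2 ω (gmul_eq_pos2 h1 h2) (by simpa [degW, hcond] using hα)]
            rfl
        · rw [gmul_eq_none (fun h => h1 ⟨(hC1.1 h).1, (hC1.1 h).2.1⟩)
              (fun h => h2 ⟨(hC2.1 h).1, (hC2.1 h).2.1⟩),
            smash_eq_none1 ω (gmul_eq_none h1 h2)]
          rfl
  · -- degrees
    rintro a ha hne
    match a with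
    | none => exact absurd rfl hne
    | some ((x1, lx), (y1, ly)) =>
      simp [coverProj, degSmash, degW, wpath, List.map_map, Function.comp_def]
end
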